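/- arXiv:2008.07529 — 6 statements merged into one kernel-verified Lean document; each statement's English description precedes it below -/
import Mathlib

section
/- Let a, b, c be real numbers with b ≤ 3a²/8, and let c₁ = c₀ + (2√6/9)·√((3a²/8 − b)³), c₂ = c₀ − (2√6/9)·√((3a²/8 − b)³), where c₀ = (a/2)(b − a²/4). Then there exist real numbers μ₁, μ₂, μ₃ such that 4x³ + 3ax² + 2bx + c = 4(x − μ₁)(x − μ₂)(x − μ₃) for all real x if and only if c₂ ≤ c ≤ c₁. -/
set_option maxHeartbeats 800000

/-- For `b ≤ 3a²/8`, the first auxiliary cubic `4x³ + 3ax² + 2bx + c` splits into real linear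
factors `4(x − μ₁)(x − μ₂)(x − μ₃)` if and only if `c₂ ≤ c ≤ c₁`, where
`c₁,₂ = c₀ ± (2√6/9)√((3a²/8 − b)³)` and `c₀ = (a/2)(b − a²/4)`. -/
theorem stmt_3 (a b c c₀ c₁ c₂ : ℝ)
    (hb : b ≤ 3 * a ^ 2 / 8)
    (hc₀ : c₀ = a / 2 * (b - a ^ 2 / 4))
    (hc₁ : c₁ = c₀ + 2 * Real.sqrt 6 / 9 * Real.sqrt ((3 * a ^ 2 / 8 - b) ^ 3))
    (hc₂ : c₂ = c₀ - 2 * Real.sqrt 6 / 9 * Real.sqrt ((3 * a ^ 2 / 8 - b) ^ 3)) :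
    (∃ μ₁ μ₂ μ₃ : ℝ, ∀ x : ℝ,
        4 * x ^ 3 + 3 * a * x ^ 2 + 2 * b * x + c =
          4 * (x - μ₁) * (x - μ₂) * (x - μ₃)) ↔
      c₂ ≤ c ∧ c ≤ c₁ := by
  have hs : (0:ℝ) ≤ 3 * a ^ 2 / 8 - b := by linarith
  set K : ℝ := 2 * Real.sqrt 6 / 9 * Real.sqrt ((3 * a ^ 2 / 8 - b) ^ 3) with hK
  have hK0 : 0 ≤ K := by positivity
  have h6 : (Real.sqrt 6) ^ 2 = 6 := Real.sq_sqrt (by norm_num)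
  have hs3 : (Real.sqrt ((3 * a ^ 2 / 8 - b) ^ 3)) ^ 2 = (3 * a ^ 2 / 8 - b) ^ 3 :=
    Real.sq_sqrt (by positivity)
  have hK2 : K ^ 2 = 8 * (3 * a ^ 2 / 8 - b) ^ 3 / 27 := by
    rw [hK]
    linear_combination (4 * (Real.sqrt ((3 * a ^ 2 / 8 - b) ^ 3)) ^ 2 / 81) * h6
      + (24 / 81) * hs3
  constructor
  · rintro ⟨μ₁, μ₂, μ₃, h⟩
    have ha' : a = -(4/3) * (μ₁ + μ₂ + μ₃) := by
      linear_combination (h 1 + h (-1)) / 6 - (h 0) / 3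
    have hb' : b = 2 * (μ₁*μ₂ + μ₁*μ₃ + μ₂*μ₃) := by
      linear_combination (h 1 - h (-1)) / 4
    have hcc : c = -4 * (μ₁*μ₂*μ₃) := by linear_combination h 0
    have key : 8 * (3 * a ^ 2 / 8 - b) ^ 3 / 27 - (c - c₀) ^ 2
        = 16/27 * ((μ₁-μ₂)*(μ₂-μ₃)*(μ₃-μ₁)) ^ 2 := by
      rw [hc₀, ha', hb', hcc]; ring
    have hq2 : (c - c₀) ^ 2 ≤ K ^ 2 := by
      rw [hK2]; linarith [key, sq_nonneg ((μ₁-μ₂)*(μ₂-μ₃)*(μ₃-μ₁))]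
    obtain ⟨hl, hr⟩ := abs_le_of_sq_le_sq' hq2 hK0
    constructor
    · rw [hc₂]; linarith
    · rw [hc₁]; linarith
  · rintro ⟨h2, h1⟩
    set m : ℝ := Real.sqrt ((3 * a ^ 2 / 8 - b) / 6) with hm
    have hm0 : 0 ≤ m := Real.sqrt_nonneg _
    have hm2 : m ^ 2 = (3 * a ^ 2 / 8 - b) / 6 := Real.sq_sqrt (by positivity)
    have hKm : K = 4 * (3 * a ^ 2 / 8 - b) / 3 * m := by
      have hR0 : 0 ≤ 4 * (3 * a ^ 2 / 8 - b) / 3 * m := by positivity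
      have hsq : K ^ 2 = (4 * (3 * a ^ 2 / 8 - b) / 3 * m) ^ 2 := by
        rw [hK2, mul_pow, hm2]; ring
      nlinarith [hK0, hR0, hsq]
    have hv1 : 4 * (-m - a/4) ^ 3 + 3 * a * (-m - a/4) ^ 2 + 2 * b * (-m - a/4) + c
        = K + (c - c₀) := by
      rw [hKm, hc₀]; linear_combination (-4*m) * hm2
    have hv2 : 4 * (m - a/4) ^ 3 + 3 * a * (m - a/4) ^ 2 + 2 * b * (m - a/4) + c
        = -K + (c - c₀) := by
      rw [hKm, hc₀]; linear_combination (4*m) * hm2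
    have hcont : ContinuousOn (fun x : ℝ => 4 * x ^ 3 + 3 * a * x ^ 2 + 2 * b * x + c)
        (Set.Icc (-m - a/4) (m - a/4)) := by fun_prop
    have hle : -m - a/4 ≤ m - a/4 := by linarith
    have h0mem : (0:ℝ) ∈ Set.Icc
        ((fun x : ℝ => 4 * x ^ 3 + 3 * a * x ^ 2 + 2 * b * x + c) (m - a/4))
        ((fun x : ℝ => 4 * x ^ 3 + 3 * a * x ^ 2 + 2 * b * x + c) (-m - a/4)) := by
      simp only [hv1, hv2, Set.mem_Icc]
      constructor
      · rw [hc₂] at h2; linarith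
      · rw [hc₁] at h1; linarith
    obtain ⟨r, hrmem, hr⟩ := intermediate_value_Icc' hle hcont h0mem
    simp only [Set.mem_Icc] at hrmem
    have hr' : 4 * r ^ 3 + 3 * a * r ^ 2 + 2 * b * r + c = 0 := hr
    clear hcont h0mem hv1 hv2 hr hc₁ hc₂ h1 h2
    have ht0 : (r + a/4) ^ 2 ≤ (3 * a ^ 2 / 8 - b) / 6 := by
      have p1 : (0:ℝ) ≤ m - (r + a/4) := by linarith [hrmem.2]
      have p2 : (0:ℝ) ≤ m + (r + a/4) := by linarith [hrmem.1]
      nlinarith [mul_nonneg p1 p2, hm2]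
    have hdisc : 0 ≤ 2 * (3 * a ^ 2 / 8 - b) - 3 * (r + a/4) ^ 2 := by
      linarith [ht0, hs]
    set D : ℝ := Real.sqrt (2 * (3 * a ^ 2 / 8 - b) - 3 * (r + a/4) ^ 2) with hDdef
    have hD : D ^ 2 = 2 * (3 * a ^ 2 / 8 - b) - 3 * (r + a/4) ^ 2 := Real.sq_sqrt hdisc
    refine ⟨r, (D - (r + a/4))/2 - a/4, (-D - (r + a/4))/2 - a/4, fun x => ?_⟩
    linear_combination (x - r) * hD + hr'
end

section
/- Let a, b, c be real numbers with b < 3a²/8 and put s = √(3a²/8 − b). Define η₁ = −a/4 + (√6/6)s, η₂ = −a/4 − (√6/6)s, θ₁ = −a/4 − (√6/3)s, θ₂ = −a/4 + (√6/3)s, and c₁,₂ = (a/2)(b − a²/4) ± (2√6/9)s³. If c₂ < c < c₁, then the cubic 4x³ + 3ax² + 2bx + c = 0 has exactly three real roots μ₃ < μ₂ < μ₁, and these satisfy the isolation inequalities θ₁ < μ₃ < η₂ < μ₂ < η₁ < μ₁ < θ₂; that is, the quartic x⁴ + ax³ + bx² + cx + d has a local minimum in (θ₁, η₂), a local maximum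 in (η₂, η₁) and a local minimum in (η₁, θ₂). -/
/-- For `b < 3a²/8`, `s = √(3a²/8 − b)`, `η₁,₂ = −a/4 ± (√6/6)s`, `θ₁ = −a/4 − (√6/3)s`,
`θ₂ = −a/4 + (√6/3)s`, `c₁,₂ = (a/2)(b − a²/4) ± (2√6/9)s³`: if `c₂ < c < c₁`, then
`4x³ + 3ax² + 2bx + c = 0` has exactly three real roots `μ₃ < μ₂ < μ₁`, and these satisfy
the isolation inequalities `θ₁ < μ₃ < η₂ < μ₂ < η₁ < μ₁ < θ₂`. -/
theorem stmt_13 (a b c s η₁ η₂ θ₁ θ₂ c₁ c₂ : ℝ)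
    (hb : b < 3 * a ^ 2 / 8)
    (hs : s = Real.sqrt (3 * a ^ 2 / 8 - b))
    (hη₁ : η₁ = -a / 4 + Real.sqrt 6 / 6 * s)
    (hη₂ : η₂ = -a / 4 - Real.sqrt 6 / 6 * s)
    (hθ₁ : θ₁ = -a / 4 - Real.sqrt 6 / 3 * s)
    (hθ₂ : θ₂ = -a / 4 + Real.sqrt 6 / 3 * s)
    (hc₁ : c₁ = a / 2 * (b - a ^ 2 / 4) + 2 * Real.sqrt 6 / 9 * s ^ 3)
    (hc₂ : c₂ = a / 2 * (b - a ^ 2 / 4) - 2 * Real.sqrt 6 / 9 * s ^ 3)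
    (hc : c₂ < c ∧ c < c₁) :
    ∃ μ₁ μ₂ μ₃ : ℝ,
      (∀ x : ℝ, 4 * x ^ 3 + 3 * a * x ^ 2 + 2 * b * x + c = 0 ↔
          x = μ₁ ∨ x = μ₂ ∨ x = μ₃) ∧
      θ₁ < μ₃ ∧ μ₃ < η₂ ∧ η₂ < μ₂ ∧ μ₂ < η₁ ∧ η₁ < μ₁ ∧ μ₁ < θ₂ := by
  obtain ⟨hcl, hcr⟩ := hc
  set t := Real.sqrt 6 with ht
  have ht2 : t ^ 2 = 6 := Real.sq_sqrt (by norm_num)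
  have ht0 : 0 < t := Real.sqrt_pos.mpr (by norm_num)
  have hs0 : 0 < s := by
    rw [hs]; exact Real.sqrt_pos.mpr (by linarith)
  have hs2 : s ^ 2 = 3 * a ^ 2 / 8 - b := by
    rw [hs]; exact Real.sq_sqrt (by linarith)
  have hts : 0 < t * s := mul_pos ht0 hs0
  set F : ℝ → ℝ := fun x => 4 * x ^ 3 + 3 * a * x ^ 2 + 2 * b * x + c with hF
  have hcont : Continuous F := by fun_prop
  -- values at the four points
  have hFθ₁ : F θ₁ = c - c₁ := by
    simp only [hF, hθ₁, hc₁]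
    linear_combination (-2 * t * s / 3) * hs2 + (-4 * t * s ^ 3 / 27) * ht2
  have hFη₂ : F η₂ = c - c₂ := by
    simp only [hF, hη₂, hc₂]
    linear_combination (-t * s / 3) * hs2 + (-t * s ^ 3 / 54) * ht2
  have hFη₁ : F η₁ = c - c₁ := by
    simp only [hF, hη₁, hc₁]
    linear_combination (t * s / 3) * hs2 + (t * s ^ 3 / 54) * ht2
  have hFθ₂ : F θ₂ = c - c₂ := by
    simp only [hF, hθ₂, hc₂]
    linear_combination (2 * t * s / 3) * hs2 + (4 * t * s ^ 3 / 27) * ht2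
  have hneg₁ : F θ₁ < 0 := by rw [hFθ₁]; linarith
  have hpos₂ : 0 < F η₂ := by rw [hFη₂]; linarith
  have hneg₂ : F η₁ < 0 := by rw [hFη₁]; linarith
  have hpos₁ : 0 < F θ₂ := by rw [hFθ₂]; linarith
  have hord1 : θ₁ < η₂ := by rw [hθ₁, hη₂]; nlinarith
  have hord2 : η₂ < η₁ := by rw [hη₂, hη₁]; nlinarith
  have hord3 : η₁ < θ₂ := by rw [hη₁, hθ₂]; nlinarith
  -- IVT
  have iv1 : ∃ x ∈ Set.Ioo θ₁ η₂, F x = 0 := by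
    have h := intermediate_value_Ioo hord1.le hcont.continuousOn
      (a := θ₁) (b := η₂)
    have : (0:ℝ) ∈ Set.Ioo (F θ₁) (F η₂) := ⟨hneg₁, hpos₂⟩
    obtain ⟨x, hx, hfx⟩ := h this
    exact ⟨x, hx, hfx⟩
  have iv2 : ∃ x ∈ Set.Ioo η₂ η₁, F x = 0 := by
    have h := intermediate_value_Ioo' hord2.le hcont.continuousOn
      (a := η₂) (b := η₁)
    have : (0:ℝ) ∈ Set.Ioo (F η₁) (F η₂) := ⟨hneg₂, hpos₂⟩
    obtain ⟨x, hx, hfx⟩ := h this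
    exact ⟨x, hx, hfx⟩
  have iv3 : ∃ x ∈ Set.Ioo η₁ θ₂, F x = 0 := by
    have h := intermediate_value_Ioo hord3.le hcont.continuousOn
      (a := η₁) (b := θ₂)
    have : (0:ℝ) ∈ Set.Ioo (F η₁) (F θ₂) := ⟨hneg₂, hpos₁⟩
    obtain ⟨x, hx, hfx⟩ := h this
    exact ⟨x, hx, hfx⟩
  obtain ⟨r, ⟨hr1, hr2⟩, hrF⟩ := iv1
  obtain ⟨q, ⟨hq1, hq2⟩, hqF⟩ := iv2
  obtain ⟨p, ⟨hp1, hp2⟩, hpF⟩ := iv3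
  -- distinctness
  have hrq : r < q := lt_trans hr2 hq1
  have hqp : q < p := lt_trans hq2 hp1
  have hrp : r < p := lt_trans hrq hqp
  have hpq' : p ≠ q := ne_of_gt hqp
  have hqr' : q ≠ r := ne_of_gt hrq
  have hpr' : p ≠ r := ne_of_gt hrp
  -- Vieta relations
  have hp0 : 4 * p ^ 3 + 3 * a * p ^ 2 + 2 * b * p + c = 0 := hpF
  have hq0 : 4 * q ^ 3 + 3 * a * q ^ 2 + 2 * b * q + c = 0 := hqF
  have hr0 : 4 * r ^ 3 + 3 * a * r ^ 2 + 2 * b * r + c = 0 := hrF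
  have hA : 4 * (p ^ 2 + p * q + q ^ 2) + 3 * a * (p + q) + 2 * b = 0 := by
    have h1 : (p - q) * (4 * (p ^ 2 + p * q + q ^ 2) + 3 * a * (p + q) + 2 * b) = 0 := by
      linear_combination hp0 - hq0
    exact (mul_eq_zero.mp h1).resolve_left (sub_ne_zero.mpr hpq')
  have hB : 4 * (q ^ 2 + q * r + r ^ 2) + 3 * a * (q + r) + 2 * b = 0 := by
    have h1 : (q - r) * (4 * (q ^ 2 + q * r + r ^ 2) + 3 * a * (q + r) + 2 * b) = 0 := by
      linear_combination hq0 - hr0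
    exact (mul_eq_zero.mp h1).resolve_left (sub_ne_zero.mpr hqr')
  have he1 : p + q + r = -3 * a / 4 := by
    have h2 : (p - r) * (4 * (p + q + r) + 3 * a) = 0 := by
      linear_combination hA - hB
    have := (mul_eq_zero.mp h2).resolve_left (sub_ne_zero.mpr hpr')
    linarith
  have he2 : p * q + q * r + r * p = b / 2 := by
    linear_combination (-1/4 : ℝ) * hA + (p + q) * he1
  have he3 : p * q * r = -c / 4 := by
    linear_combination (1/4 : ℝ) * hp0 - p ^ 2 * he1 + p * he2
  refine ⟨p, q, r, ?_, hr1, hr2, hq1, hq2, hp1, hp2⟩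
  intro x
  constructor
  · intro hx
    have hprod : (x - p) * ((x - q) * (x - r)) = 0 := by
      linear_combination (1/4 : ℝ) * hx - x ^ 2 * he1 + x * he2 - he3
    rcases mul_eq_zero.mp hprod with h | h
    · exact Or.inl (sub_eq_zero.mp h)
    · rcases mul_eq_zero.mp h with h | h
      · exact Or.inr (Or.inl (sub_eq_zero.mp h))
      · exact Or.inr (Or.inr (sub_eq_zero.mp h))
  · rintro (rfl | rfl | rfl) <;> assumption
end

section
/- Let a, b, c be real numbers with b < 3a²/8 and put s = √(3a²/8 − b), θ₁ = −a/4 − (√6/3)s, θ₂ = −a/4 + (√6/3)s, and c₁,₂ = (a/2)(b − a²/4) ± (2√6/9)s³. (i) If c < c₂, then the cubic 4x³ + 3ax² + 2bx + c = 0 has exactly one real root μ, and μ > θ₂. (ii) If c > c₁, then the cubic 4x³ + 3ax² + 2bx + c = 0 has exactly one real root μ, and μ < θ₁. In either case the quartic x⁴ + ax³ + bx² + cx + d has a single stationary point (a local minimum), located to the right of θ₂ in case (i) and to the left of θ₁ in case (ii). -/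
set_option maxHeartbeats 1000000

/-- For `b < 3a²/8`, `s = √(3a²/8 − b)`, `θ₁ = −a/4 − (√6/3)s`, `θ₂ = −a/4 + (√6/3)s`,
`c₁,₂ = (a/2)(b − a²/4) ± (2√6/9)s³`:
(i) if `c < c₂`, the cubic `4x³ + 3ax² + 2bx + c = 0` has exactly one real root `μ`, and
`μ > θ₂`; (ii) if `c > c₁`, the cubic has exactly one real root `μ`, and `μ < θ₁`. -/
theorem stmt_14 (a b c s θ₁ θ₂ c₁ c₂ : ℝ)
    (hb : b < 3 * a ^ 2 / 8)
    (hs : s = Real.sqrt (3 * a ^ 2 / 8 - b))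
    (hθ₁ : θ₁ = -a / 4 - Real.sqrt 6 / 3 * s)
    (hθ₂ : θ₂ = -a / 4 + Real.sqrt 6 / 3 * s)
    (hc₁ : c₁ = a / 2 * (b - a ^ 2 / 4) + 2 * Real.sqrt 6 / 9 * s ^ 3)
    (hc₂ : c₂ = a / 2 * (b - a ^ 2 / 4) - 2 * Real.sqrt 6 / 9 * s ^ 3) :
    (c < c₂ →
      ∃ μ : ℝ, (∀ x : ℝ, 4 * x ^ 3 + 3 * a * x ^ 2 + 2 * b * x + c = 0 ↔ x = μ) ∧ θ₂ < μ) ∧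
    (c > c₁ →
      ∃ μ : ℝ, (∀ x : ℝ, 4 * x ^ 3 + 3 * a * x ^ 2 + 2 * b * x + c = 0 ↔ x = μ) ∧ μ < θ₁) := by
  have hSpos : (0:ℝ) < 3 * a ^ 2 / 8 - b := by linarith
  have hspos : 0 < s := by rw [hs]; exact Real.sqrt_pos.mpr hSpos
  have hs2 : s ^ 2 = 3 * a ^ 2 / 8 - b := by
    rw [hs]; exact Real.sq_sqrt hSpos.le
  have hrpos : (0:ℝ) < Real.sqrt 6 := Real.sqrt_pos.mpr (by norm_num)
  have hr : Real.sqrt 6 ^ 2 = 6 := Real.sq_sqrt (by norm_num)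
  set r := Real.sqrt 6 with hrdef
  have hrs : 0 < r / 3 * s := mul_pos (by positivity) hspos
  have hsq : (r / 3 * s) ^ 2 = a ^ 2 / 4 - 2 * b / 3 := by
    linear_combination (s ^ 2 / 9) * hr + (2 / 3) * hs2
  have hcont : Continuous fun x : ℝ => 4 * x ^ 3 + 3 * a * x ^ 2 + 2 * b * x + c := by
    fun_prop
  have hfac : ∀ m : ℝ, θ₂ < m ∨ m < θ₁ → 0 < 12 * m ^ 2 + 6 * a * m + 2 * b := by
    intro m hm
    have h2 : (r / 3 * s) ^ 2 < (m + a / 4) ^ 2 := by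
      rcases hm with h | h
      · have h1 : r / 3 * s < m + a / 4 := by rw [hθ₂] at h; linarith
        nlinarith [hrs, h1]
      · have h1 : r / 3 * s < -(m + a / 4) := by rw [hθ₁] at h; linarith
        nlinarith [hrs, h1]
    nlinarith [h2, hsq]
  constructor
  · -- case (i): c < c₂
    intro hc
    have key : ∀ x : ℝ, 4 * x ^ 3 + 3 * a * x ^ 2 + 2 * b * x + c
        = 4 * (x - θ₂) * (x - (-a / 4 - r / 6 * s)) ^ 2 + (c - c₂) := by
      intro x
      rw [hθ₂, hc₂]
      linear_combination ((x + a/4) * s^2 / 3 + r * s^3 / 27) * hr + (2*(x + a/4)) * hs2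
    have hroot_gt : ∀ x : ℝ, 4 * x ^ 3 + 3 * a * x ^ 2 + 2 * b * x + c = 0 → θ₂ < x := by
      intro x hx
      by_contra h
      push_neg at h
      have h1 : 4 * (x - θ₂) * (x - (-a / 4 - r / 6 * s)) ^ 2 + (c - c₂) = 0 := by
        rw [← key x]; exact hx
      nlinarith [mul_nonneg (sub_nonneg.mpr h) (sq_nonneg (x - (-a / 4 - r / 6 * s)))]
    have hθη : -a / 4 - r / 6 * s < θ₂ := by
      rw [hθ₂]; nlinarith [mul_pos hrpos hspos]
    obtain ⟨T, hTdef⟩ : ∃ T : ℝ, T = θ₂ + 1 + (c₂ - c) / 4 := ⟨_, rfl⟩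
    have hTθ : θ₂ < T := by rw [hTdef]; linarith
    have hTη : 1 < T - (-a / 4 - r / 6 * s) := by rw [hTdef]; linarith
    have hPθ : 4 * θ₂ ^ 3 + 3 * a * θ₂ ^ 2 + 2 * b * θ₂ + c < 0 := by
      rw [key θ₂]
      have h0 : 4 * (θ₂ - θ₂) * (θ₂ - (-a / 4 - r / 6 * s)) ^ 2 + (c - c₂) = c - c₂ := by ring
      rw [h0]; linarith
    have hPT : 0 < 4 * T ^ 3 + 3 * a * T ^ 2 + 2 * b * T + c := by
      rw [key T]
      have h1 : 0 < T - θ₂ := by linarith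
      have h2 : 0 ≤ (T - (-a / 4 - r / 6 * s)) ^ 2 - 1 := by nlinarith [hTη]
      have h3 : T - θ₂ = 1 + (c₂ - c) / 4 := by rw [hTdef]; ring
      nlinarith [mul_nonneg h1.le h2, h3]
    obtain ⟨μ, hμmem, hμ0⟩ := intermediate_value_Icc hTθ.le hcont.continuousOn
      (Set.mem_Icc.mpr ⟨hPθ.le, hPT.le⟩)
    refine ⟨μ, fun x => ⟨fun hx => ?_, fun hx => by rw [hx]; exact hμ0⟩, hroot_gt μ hμ0⟩
    have hxθ := hroot_gt x hx
    have hμθ := hroot_gt μ hμ0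
    by_contra hne
    have hdiff : (x - μ) * (12 * ((x + μ)/2) ^ 2 + 6 * a * ((x + μ)/2) + 2 * b + (x - μ)^2) = 0 := by
      linear_combination hx - hμ0
    have hpos := hfac ((x + μ)/2) (Or.inl (by linarith))
    rcases mul_eq_zero.mp hdiff with h | h
    · exact hne (by linarith [sub_eq_zero.mp h])
    · nlinarith [sq_nonneg (x - μ), h, hpos]
  · -- case (ii): c > c₁
    intro hc
    have key : ∀ x : ℝ, 4 * x ^ 3 + 3 * a * x ^ 2 + 2 * b * x + c
        = 4 * (x - θ₁) * (x - (-a / 4 + r / 6 * s)) ^ 2 + (c - c₁) := by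
      intro x
      rw [hθ₁, hc₁]
      linear_combination ((x + a/4) * s^2 / 3 - r * s^3 / 27) * hr + (2*(x + a/4)) * hs2
    have hroot_lt : ∀ x : ℝ, 4 * x ^ 3 + 3 * a * x ^ 2 + 2 * b * x + c = 0 → x < θ₁ := by
      intro x hx
      by_contra h
      push_neg at h
      have h1 : 4 * (x - θ₁) * (x - (-a / 4 + r / 6 * s)) ^ 2 + (c - c₁) = 0 := by
        rw [← key x]; exact hx
      nlinarith [mul_nonneg (sub_nonneg.mpr h) (sq_nonneg (x - (-a / 4 + r / 6 * s)))]
    have hθη : θ₁ < -a / 4 + r / 6 * s := by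
      rw [hθ₁]; nlinarith [mul_pos hrpos hspos]
    obtain ⟨T, hTdef⟩ : ∃ T : ℝ, T = θ₁ - 1 - (c - c₁) / 4 := ⟨_, rfl⟩
    have hTθ : T < θ₁ := by rw [hTdef]; linarith
    have hTη : 1 < (-a / 4 + r / 6 * s) - T := by rw [hTdef]; linarith
    have hPθ : 0 < 4 * θ₁ ^ 3 + 3 * a * θ₁ ^ 2 + 2 * b * θ₁ + c := by
      rw [key θ₁]
      have h0 : 4 * (θ₁ - θ₁) * (θ₁ - (-a / 4 + r / 6 * s)) ^ 2 + (c - c₁) = c - c₁ := by ring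
      rw [h0]; linarith
    have hPT : 4 * T ^ 3 + 3 * a * T ^ 2 + 2 * b * T + c < 0 := by
      rw [key T]
      have h1 : 0 < θ₁ - T := by linarith
      have h2 : 0 ≤ (T - (-a / 4 + r / 6 * s)) ^ 2 - 1 := by nlinarith [hTη]
      have h3 : θ₁ - T = 1 + (c - c₁) / 4 := by rw [hTdef]; ring
      nlinarith [mul_nonneg h1.le h2, h3]
    obtain ⟨μ, hμmem, hμ0⟩ := intermediate_value_Icc hTθ.le hcont.continuousOn
      (Set.mem_Icc.mpr ⟨hPT.le, hPθ.le⟩)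
    refine ⟨μ, fun x => ⟨fun hx => ?_, fun hx => by rw [hx]; exact hμ0⟩, hroot_lt μ hμ0⟩
    have hxθ := hroot_lt x hx
    have hμθ := hroot_lt μ hμ0
    by_contra hne
    have hdiff : (x - μ) * (12 * ((x + μ)/2) ^ 2 + 6 * a * ((x + μ)/2) + 2 * b + (x - μ)^2) = 0 := by
      linear_combination hx - hμ0
    have hpos := hfac ((x + μ)/2) (Or.inr (by linarith))
    rcases mul_eq_zero.mp hdiff with h | h
    · exact hne (by linarith [sub_eq_zero.mp h])
    · nlinarith [sq_nonneg (x - μ), h, hpos]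
end

section
/- Let a, b, c, d be real numbers with b > 3a²/8, c < 0 and d < 0. Then: (i) the cubic x³ + ax² + bx + c = 0 has a unique real root λ, and λ > 0; (ii) the quartic x⁴ + ax³ + bx² + cx + d = 0 has a real root x₂ with −d/c < x₂ < 0 (note −d/c < 0 here) and a real root x₁ with x₁ > λ. -/
open Set

private lemma cubic_big (a b c N : ℝ) (hN : 1 + |a| + |b| + |c| ≤ N) :
    0 ≤ N ^ 3 + a * N ^ 2 + b * N + c := by
  have ha1 := neg_abs_le a
  have hb1 := neg_abs_le b
  have hc1 := neg_abs_le c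
  have ha2 := abs_nonneg a
  have hb2 := abs_nonneg b
  have hc2 := abs_nonneg c
  have hN1 : (1:ℝ) ≤ N := by linarith
  have hN0 : (0:ℝ) ≤ N := by linarith
  have h2 : (0:ℝ) ≤ N ^ 2 := by positivity
  have h21 : N ≤ N ^ 2 := by nlinarith
  have h20 : (1:ℝ) ≤ N ^ 2 := le_trans hN1 h21
  have h3 : (1 + |a| + |b| + |c|) * N ^ 2 ≤ N ^ 3 := by nlinarith
  have hA : -|a| * N ^ 2 ≤ a * N ^ 2 := mul_le_mul_of_nonneg_right ha1 h2
  have hB : -|b| * N ≤ b * N := mul_le_mul_of_nonneg_right hb1 hN0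
  have hB2 : |b| * N ≤ |b| * N ^ 2 := mul_le_mul_of_nonneg_left h21 hb2
  have hC2 : |c| * 1 ≤ |c| * N ^ 2 := mul_le_mul_of_nonneg_left h20 hc2
  nlinarith

private lemma quartic_big (a b c d N : ℝ) (hN : 1 + |a| + |b| + |c| + |d| ≤ N) :
    0 ≤ N ^ 4 + a * N ^ 3 + b * N ^ 2 + c * N + d := by
  have ha1 := neg_abs_le a
  have hb1 := neg_abs_le b
  have hc1 := neg_abs_le c
  have hd1 := neg_abs_le d
  have ha2 := abs_nonneg a
  have hb2 := abs_nonneg b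
  have hc2 := abs_nonneg c
  have hd2 := abs_nonneg d
  have hN1 : (1:ℝ) ≤ N := by linarith
  have hN0 : (0:ℝ) ≤ N := by linarith
  have h3 : (0:ℝ) ≤ N ^ 3 := by positivity
  have h32 : N ^ 2 ≤ N ^ 3 := by nlinarith [sq_nonneg N]
  have h31 : N ≤ N ^ 3 := by nlinarith [sq_nonneg (N - 1), sq_nonneg N]
  have h30 : (1:ℝ) ≤ N ^ 3 := le_trans hN1 h31
  have h4 : (1 + |a| + |b| + |c| + |d|) * N ^ 3 ≤ N ^ 4 := by nlinarith
  have hA : -|a| * N ^ 3 ≤ a * N ^ 3 := mul_le_mul_of_nonneg_right ha1 h3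
  have hB : -|b| * N ^ 2 ≤ b * N ^ 2 := mul_le_mul_of_nonneg_right hb1 (by positivity)
  have hC : -|c| * N ≤ c * N := mul_le_mul_of_nonneg_right hc1 hN0
  have hB2 : |b| * N ^ 2 ≤ |b| * N ^ 3 := mul_le_mul_of_nonneg_left h32 hb2
  have hC2 : |c| * N ≤ |c| * N ^ 3 := mul_le_mul_of_nonneg_left h31 hc2
  have hD2 : |d| * 1 ≤ |d| * N ^ 3 := mul_le_mul_of_nonneg_left h30 hd2
  nlinarith


/-- For `b > 3a²/8`, `c < 0`, `d < 0`: (i) the cubic `x³ + ax² + bx + c = 0` has a unique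
real root `λ`, and `λ > 0`; (ii) the quartic `x⁴ + ax³ + bx² + cx + d = 0` has a real root
`x₂` with `−d/c < x₂ < 0` and a real root `x₁` with `x₁ > λ`. -/
theorem stmt_16 (a b c d : ℝ)
    (hb : b > 3 * a ^ 2 / 8) (hc : c < 0) (hd : d < 0) :
    ∃ l : ℝ,
      (∀ x : ℝ, x ^ 3 + a * x ^ 2 + b * x + c = 0 ↔ x = l) ∧ 0 < l ∧
      (∃ x₂ : ℝ, x₂ ^ 4 + a * x₂ ^ 3 + b * x₂ ^ 2 + c * x₂ + d = 0 ∧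
        -d / c < x₂ ∧ x₂ < 0) ∧
      (∃ x₁ : ℝ, x₁ ^ 4 + a * x₁ ^ 3 + b * x₁ ^ 2 + c * x₁ + d = 0 ∧ l < x₁) := by
  set f : ℝ → ℝ := fun x => x ^ 3 + a * x ^ 2 + b * x + c with hf
  have hcont : Continuous f := by continuity
  have hmono : StrictMono f := by
    intro x y hxy
    simp only [hf]
    nlinarith [sq_nonneg (x - y), sq_nonneg (x + y + 2 * a / 3), sq_nonneg a]
  -- existence of a root of f
  set M : ℝ := 1 + |a| + |b| + |c| with hM
  have hM1 : (1:ℝ) ≤ M := by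
    have := abs_nonneg a; have := abs_nonneg b; have := abs_nonneg c
    simp only [hM]; linarith
  have hfM : 0 ≤ f M := by
    simp only [hf]
    exact cubic_big a b c M (le_of_eq hM.symm)
  have hf0 : f 0 < 0 := by simp [hf]; linarith
  have h0M : (0:ℝ) ≤ M := le_trans zero_le_one hM1
  obtain ⟨l, hlmem, hfl⟩ := intermediate_value_Icc h0M hcont.continuousOn
    (show (0:ℝ) ∈ Icc (f 0) (f M) from ⟨le_of_lt hf0, hfM⟩)
  have hlpos : 0 < l := by
    by_contra h
    push_neg at h
    have := hmono.monotone h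
    rw [hfl] at this
    linarith
  refine ⟨l, ?_, hlpos, ?_, ?_⟩
  · intro x
    constructor
    · intro hx
      have : f x = f l := by
        have h2 : f l = 0 := hfl
        simp only [hf] at h2 ⊢
        linarith
      exact hmono.injective this
    · intro hx
      subst hx
      simpa [hf] using hfl
  · -- x₂
    set t : ℝ := -d / c with ht
    have htneg : t < 0 := by
      have : -d > 0 := by linarith
      exact div_neg_of_pos_of_neg this hc
    set q : ℝ → ℝ := fun x => x ^ 4 + a * x ^ 3 + b * x ^ 2 + c * x + d with hq
    have hqcont : Continuous q := by continuity
    have hqt : 0 < q t := by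
      have hft : f t < f 0 := hmono htneg
      have hft' : f t < c := by simpa [hf] using hft
      have h1 : t * f t > t * c := by
        exact (mul_lt_mul_left_of_neg htneg).mpr hft'
      have h2 : t * c = -d := div_mul_cancel₀ (-d) hc.ne
      have : t * f t > -d := by rw [← h2]; exact h1
      have hexp : q t = t * f t + d := by simp only [hq, hf]; ring
      rw [hexp]; linarith
    have hq0 : q 0 < 0 := by simp [hq]; linarith
    obtain ⟨x₂, hx₂mem, hqx₂⟩ := intermediate_value_Icc' (le_of_lt htneg) hqcont.continuousOn
      (show (0:ℝ) ∈ Icc (q 0) (q t) from ⟨le_of_lt hq0, le_of_lt hqt⟩)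
    refine ⟨x₂, by simpa [hq] using hqx₂, ?_, ?_⟩
    · rcases lt_or_eq_of_le hx₂mem.1 with h | h
      · exact h
      · exfalso; rw [← h] at hqx₂; linarith
    · rcases lt_or_eq_of_le hx₂mem.2 with h | h
      · exact h
      · exfalso; rw [h] at hqx₂; linarith
  · -- x₁
    set q : ℝ → ℝ := fun x => x ^ 4 + a * x ^ 3 + b * x ^ 2 + c * x + d with hq
    have hqcont : Continuous q := by continuity
    have hql : q l < 0 := by
      have hexp : q l = l * f l + d := by simp only [hq, hf]; ring
      rw [hexp, hfl]; linarith
    obtain ⟨N, hN⟩ : ∃ N : ℝ, N = l + 1 + |a| + |b| + |c| + |d| := ⟨_, rfl⟩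
    have hlN : l ≤ N := by
      have := abs_nonneg a; have := abs_nonneg b; have := abs_nonneg c; have := abs_nonneg d
      rw [hN]; linarith
    have hN1 : (1:ℝ) ≤ N := by
      have := abs_nonneg a; have := abs_nonneg b; have := abs_nonneg c; have := abs_nonneg d
      rw [hN]; linarith
    have hqN : 0 ≤ q N := by
      have hNge : 1 + |a| + |b| + |c| + |d| ≤ N := by
        rw [hN]; linarith [hlpos.le]
      simp only [hq]
      exact quartic_big a b c d N hNge
    obtain ⟨x₁, hx₁mem, hqx₁⟩ := intermediate_value_Icc hlN hqcont.continuousOn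
      (show (0:ℝ) ∈ Icc (q l) (q N) from ⟨le_of_lt hql, hqN⟩)
    refine ⟨x₁, by simpa [hq] using hqx₁, ?_⟩
    rcases lt_or_eq_of_le hx₁mem.1 with h | h
    · exact h
    · exfalso; rw [← h] at hqx₁; linarith
end

section
/- Let a, b, c be real numbers with b > 3a²/8 and c < 0. Then the cubic 4x³ + 3ax² + 2bx + c = 0 has a unique real root μ, this μ is positive, and g(μ) := μ⁴ + aμ³ + bμ² + cμ < 0. Moreover, if d is a real number with d > −g(μ) = −(μ⁴ + aμ³ + bμ² + cμ), then the quartic x⁴ + ax³ + bx² + cx + d = 0 has no real roots. -/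
/-- For `b > 3a²/8` and `c < 0`: the cubic `4x³ + 3ax² + 2bx + c = 0` has a unique real root
`μ`, which is positive, with `g(μ) = μ⁴ + aμ³ + bμ² + cμ < 0`; and whenever `d > −g(μ)`,
the quartic `x⁴ + ax³ + bx² + cx + d = 0` has no real roots. -/
theorem stmt_17 (a b c : ℝ)
    (hb : b > 3 * a ^ 2 / 8) (hc : c < 0) :
    ∃ μ : ℝ,
      (∀ x : ℝ, 4 * x ^ 3 + 3 * a * x ^ 2 + 2 * b * x + c = 0 ↔ x = μ) ∧ 0 < μ ∧
      μ ^ 4 + a * μ ^ 3 + b * μ ^ 2 + c * μ < 0 ∧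
      ∀ d : ℝ, d > -(μ ^ 4 + a * μ ^ 3 + b * μ ^ 2 + c * μ) →
        ∀ x : ℝ, x ^ 4 + a * x ^ 3 + b * x ^ 2 + c * x + d ≠ 0 := by
  set q : ℝ → ℝ := fun x => 4 * x ^ 3 + 3 * a * x ^ 2 + 2 * b * x + c with hqdef
  have hmono : StrictMono q := by
    intro x y hxy
    have key : 4 * (x^2 + x*y + y^2) + 3 * a * (x + y) + 2 * b > 0 := by
      nlinarith [sq_nonneg (x + y + a/2), sq_nonneg (x + a/4), sq_nonneg (y + a/4)]
    have hdiff : q y - q x = (y - x) * (4 * (x^2 + x*y + y^2) + 3 * a * (x + y) + 2 * b) := by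
      simp only [hqdef]; ring
    nlinarith [mul_pos (sub_pos.mpr hxy) key]
  set M : ℝ := |a| + |b| + |c| + 1 with hM
  have hM1 : (1:ℝ) ≤ M := by rw [hM]; nlinarith [abs_nonneg a, abs_nonneg b, abs_nonneg c]
  have hMpos : (0:ℝ) ≤ M := by linarith
  have hqM : 0 < q M := by
    have ha1 : -|a| ≤ a := neg_abs_le a
    have hb1 : -|b| ≤ b := neg_abs_le b
    have hc1 : -|c| ≤ c := neg_abs_le c
    have ha0 : 0 ≤ |a| := abs_nonneg a
    have hb0 : 0 ≤ |b| := abs_nonneg b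
    have hc0 : 0 ≤ |c| := abs_nonneg c
    have hM2 : M * M ≥ M := le_mul_of_one_le_left hMpos hM1
    have h3 : 4 * M^3 - 3 * |a| * M ^ 2 - 2 * |b| * M - |c| > 0 := by
      nlinarith [mul_nonneg (mul_nonneg hMpos hMpos) hMpos, sq_nonneg M,
        mul_le_mul_of_nonneg_left hM2 hb0, mul_le_mul_of_nonneg_left hM2 ha0,
        mul_le_mul_of_nonneg_left hM2 hc0]
    simp only [hqdef]
    nlinarith [mul_le_mul_of_nonneg_right (mul_le_mul_of_nonneg_right ha1 hMpos) hMpos,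
      mul_le_mul_of_nonneg_right hb1 hMpos]
  have hq0 : q 0 < 0 := by simp [hqdef]; nlinarith
  have hcont : ContinuousOn q (Set.Icc 0 M) := by
    apply Continuous.continuousOn; simp only [hqdef]; continuity
  obtain ⟨μ, hμmem, hμroot⟩ : ∃ μ ∈ Set.Icc (0:ℝ) M, q μ = 0 := by
    have := intermediate_value_Icc hMpos hcont
    exact this ⟨le_of_lt hq0, le_of_lt hqM⟩
  have hμpos : 0 < μ := by
    rcases lt_or_eq_of_le hμmem.1 with h | h
    · exact h
    · exfalso; rw [← h] at hμroot; linarith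
  have hroot : 4 * μ ^ 3 + 3 * a * μ ^ 2 + 2 * b * μ + c = 0 := hμroot
  refine ⟨μ, ?_, hμpos, ?_, ?_⟩
  · intro x
    constructor
    · intro hx
      by_contra hne
      rcases lt_or_gt_of_ne hne with h | h
      · have := hmono h; simp only [hqdef] at this; linarith
      · have := hmono h; simp only [hqdef] at this; linarith
    · intro hx; rw [hx]; exact hroot
  · -- g(μ) < 0
    nlinarith [sq_nonneg (μ + a/3), sq_nonneg μ, mul_pos hμpos hμpos, sq_nonneg a,
      mul_pos (mul_pos hμpos hμpos) hμpos]
  · intro d hd x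
    intro hx
    nlinarith [sq_nonneg ((x - μ) * (2*x + a + 2*μ)), sq_nonneg ((x - μ) * (a + 4*μ)),
      mul_nonneg (sq_nonneg (x - μ)) (by nlinarith : (0:ℝ) ≤ 4*b - 3*a^2/2), hroot, hd]
end

section
/- Let a, b, c be real numbers with b < 3a²/8 and c₂ < c < c₁, where c₁,₂ = (a/2)(b − a²/4) ± (2√6/9)·√((3a²/8 − b)³), so that the cubic 4x³ + 3ax² + 2bx + c = 0 has three distinct real roots μ₃ < μ₂ < μ₁ (μ₃ and μ₁ being the two local minima of g(x) = x⁴ + ax³ + bx² + cx). Set c₀ = (a/2)(b − a²/4). Then g(μ₃) < g(μ₁) if and only if c > c₀, g(μ₃) > g(μ₁) if and only if c < c₀, and g(μ₃) = g(μ₁) if and only if c = c₀; that is, the sign of c − c₀ determines which of the two local minima of the quartic family is the deeper one (equivalently the ordering of −δ₃ and −δ₁). -/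
/-- For `b < 3a²/8` and `c₂ < c < c₁` (with `c₁,₂ = c₀ ± (2√6/9)√((3a²/8 − b)³)`,
`c₀ = (a/2)(b − a²/4)`), let `μ₃ < μ₂ < μ₁` be the three real roots of
`4x³ + 3ax² + 2bx + c = 0` and `g(x) = x⁴ + ax³ + bx² + cx`. Then
`g(μ₃) < g(μ₁) ↔ c > c₀`, `g(μ₃) > g(μ₁) ↔ c < c₀`, and `g(μ₃) = g(μ₁) ↔ c = c₀`. -/
theorem stmt_19 (a b c c₀ c₁ c₂ μ₁ μ₂ μ₃ : ℝ)
    (hb : b < 3 * a ^ 2 / 8)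
    (hc₀ : c₀ = a / 2 * (b - a ^ 2 / 4))
    (hc₁ : c₁ = c₀ + 2 * Real.sqrt 6 / 9 * Real.sqrt ((3 * a ^ 2 / 8 - b) ^ 3))
    (hc₂ : c₂ = c₀ - 2 * Real.sqrt 6 / 9 * Real.sqrt ((3 * a ^ 2 / 8 - b) ^ 3))
    (hc : c₂ < c ∧ c < c₁)
    (hμ₁ : 4 * μ₁ ^ 3 + 3 * a * μ₁ ^ 2 + 2 * b * μ₁ + c = 0)
    (hμ₂ : 4 * μ₂ ^ 3 + 3 * a * μ₂ ^ 2 + 2 * b * μ₂ + c = 0)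
    (hμ₃ : 4 * μ₃ ^ 3 + 3 * a * μ₃ ^ 2 + 2 * b * μ₃ + c = 0)
    (horder : μ₃ < μ₂ ∧ μ₂ < μ₁) :
    ((μ₃ ^ 4 + a * μ₃ ^ 3 + b * μ₃ ^ 2 + c * μ₃ < μ₁ ^ 4 + a * μ₁ ^ 3 + b * μ₁ ^ 2 + c * μ₁) ↔
        c₀ < c) ∧
    ((μ₃ ^ 4 + a * μ₃ ^ 3 + b * μ₃ ^ 2 + c * μ₃ > μ₁ ^ 4 + a * μ₁ ^ 3 + b * μ₁ ^ 2 + c * μ₁) ↔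
        c < c₀) ∧
    ((μ₃ ^ 4 + a * μ₃ ^ 3 + b * μ₃ ^ 2 + c * μ₃ = μ₁ ^ 4 + a * μ₁ ^ 3 + b * μ₁ ^ 2 + c * μ₁) ↔
        c = c₀) := by

  obtain ⟨h32, h21⟩ := horder
  have hne12 : μ₁ - μ₂ ≠ 0 := sub_ne_zero.mpr (ne_of_gt h21)
  have hne23 : μ₂ - μ₃ ≠ 0 := sub_ne_zero.mpr (ne_of_gt h32)
  have hne13 : μ₁ - μ₃ ≠ 0 := sub_ne_zero.mpr (ne_of_gt (h32.trans h21))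
  have h12 : 4 * (μ₁ ^ 2 + μ₁ * μ₂ + μ₂ ^ 2) + 3 * a * (μ₁ + μ₂) + 2 * b = 0 := by
    have hk : (μ₁ - μ₂) * (4 * (μ₁ ^ 2 + μ₁ * μ₂ + μ₂ ^ 2) + 3 * a * (μ₁ + μ₂) + 2 * b) = 0 := by
      linear_combination hμ₁ - hμ₂
    exact (mul_eq_zero.mp hk).resolve_left hne12
  have h23 : 4 * (μ₂ ^ 2 + μ₂ * μ₃ + μ₃ ^ 2) + 3 * a * (μ₂ + μ₃) + 2 * b = 0 := by
    have hk : (μ₂ - μ₃) * (4 * (μ₂ ^ 2 + μ₂ * μ₃ + μ₃ ^ 2) + 3 * a * (μ₂ + μ₃) + 2 * b) = 0 := by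
      linear_combination hμ₂ - hμ₃
    exact (mul_eq_zero.mp hk).resolve_left hne23
  have ha : 4 * (μ₁ + μ₂ + μ₃) + 3 * a = 0 := by
    have hk : (μ₁ - μ₃) * (4 * (μ₁ + μ₂ + μ₃) + 3 * a) = 0 := by
      linear_combination h12 - h23
    exact (mul_eq_zero.mp hk).resolve_left hne13
  have ea : a = -4 / 3 * (μ₁ + μ₂ + μ₃) := by linarith
  have eb : b = 2 * (μ₁ * μ₂ + μ₂ * μ₃ + μ₃ * μ₁) := by
    have h12' := h12
    rw [ea] at h12'
    linear_combination (1 / 2 : ℝ) * h12'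
  have ec : c = -4 * (μ₁ * μ₂ * μ₃) := by
    have h2' := hμ₂
    rw [ea, eb] at h2'
    linear_combination h2'
  have e1 : (μ₃ ^ 4 + a * μ₃ ^ 3 + b * μ₃ ^ 2 + c * μ₃) -
      (μ₁ ^ 4 + a * μ₁ ^ 3 + b * μ₁ ^ 2 + c * μ₁) =
      ((μ₁ - μ₃) ^ 3 / 3) * (μ₁ + μ₃ - 2 * μ₂) := by
    rw [ea, eb, ec]; ring
  have e2 : c₀ - c =
      (4 / 27 * ((2 * μ₁ - μ₂ - μ₃) * (μ₁ + μ₂ - 2 * μ₃))) * (μ₁ + μ₃ - 2 * μ₂) := by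
    rw [hc₀, ea, eb, ec]; ring
  have hk1 : (0 : ℝ) < (μ₁ - μ₃) ^ 3 / 3 := by
    have h0 : (0 : ℝ) < μ₁ - μ₃ := by linarith
    positivity
  have hk2 : (0 : ℝ) < 4 / 27 * ((2 * μ₁ - μ₂ - μ₃) * (μ₁ + μ₂ - 2 * μ₃)) := by
    have h1 : (0 : ℝ) < 2 * μ₁ - μ₂ - μ₃ := by linarith
    have h2 : (0 : ℝ) < μ₁ + μ₂ - 2 * μ₃ := by linarith
    have := mul_pos h1 h2
    linarith
  have key : ∀ k u : ℝ, 0 < k → ((k * u < 0 ↔ u < 0) ∧ (0 < k * u ↔ 0 < u) ∧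
      (k * u = 0 ↔ u = 0)) := by
    intro k u hk
    refine ⟨⟨fun h => ?_, fun h => mul_neg_of_pos_of_neg hk h⟩,
      ⟨fun h => ?_, fun h => mul_pos hk h⟩, ?_⟩
    · by_contra h'
      push_neg at h'
      exact absurd (mul_nonneg hk.le h') (not_le.mpr h)
    · by_contra h'
      push_neg at h'
      exact absurd (mul_nonpos_of_nonneg_of_nonpos hk.le h') (not_le.mpr h)
    · rw [mul_eq_zero]
      simp [hk.ne']
  obtain ⟨ka, kb, kc⟩ := key _ _ hk1
  obtain ⟨la, lb, lc⟩ := key _ _ hk2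
  refine ⟨⟨fun h => ?_, fun h => ?_⟩, ⟨fun h => ?_, fun h => ?_⟩, ⟨fun h => ?_, fun h => ?_⟩⟩
  · have ht : μ₁ + μ₃ - 2 * μ₂ < 0 := ka.mp (by linarith [e1])
    have := la.mpr ht
    linarith [e2]
  · have ht : μ₁ + μ₃ - 2 * μ₂ < 0 := la.mp (by linarith [e2])
    have := ka.mpr ht
    linarith [e1]
  · have ht : 0 < μ₁ + μ₃ - 2 * μ₂ := kb.mp (by linarith [e1])
    have := lb.mpr ht
    linarith [e2]
  · have ht : 0 < μ₁ + μ₃ - 2 * μ₂ := lb.mp (by linarith [e2])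
    have := kb.mpr ht
    linarith [e1]
  · have ht : μ₁ + μ₃ - 2 * μ₂ = 0 := kc.mp (by linarith [e1])
    have := lc.mpr ht
    linarith [e2]
  · have ht : μ₁ + μ₃ - 2 * μ₂ = 0 := lc.mp (by linarith [e2])
    have := kc.mpr ht
    linarith [e1]
end
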